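/- Define λ_n = ⌈(5n+2 - √(5n²+20n+24))/10⌉ and ρ_n = ⌈(5n-4 - √(5n²-4))/10⌉. Then for all n ≥ 5: λ_{n-1} ≤ ρ_n ≤ λ_{n-4} + 1 ≤ λ_n. -/

import Mathlib

noncomputable def lam (n : ℕ) : ℤ :=
  ⌈((5 * (n : ℝ) + 2) - Real.sqrt (5 * (n : ℝ) ^ 2 + 20 * (n : ℝ) + 24)) / 10⌉

noncomputable def rho (n : ℕ) : ℤ :=
  ⌈((5 * (n : ℝ) - 4) - Real.sqrt (5 * (n : ℝ) ^ 2 - 4)) / 10⌉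

set_option maxHeartbeats 1600000 in
theorem stmt10 (n : ℕ) (hn : 5 ≤ n) :
    lam (n - 1) ≤ rho n ∧ rho n ≤ lam (n - 4) + 1 ∧ lam (n - 4) + 1 ≤ lam n := by
  have hx : (5:ℝ) ≤ (n:ℝ) := by exact_mod_cast hn
  set x : ℝ := (n:ℝ) with hxdef
  have h1 : ((n - 1 : ℕ) : ℝ) = x - 1 := by
    rw [Nat.cast_sub (by omega)]; norm_num; exact hxdef.symm
  have h4 : ((n - 4 : ℕ) : ℝ) = x - 4 := by
    rw [Nat.cast_sub (by omega)]; norm_num; exact hxdef.symm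
  unfold lam rho
  rw [h1, h4]
  have e1 : 5 * (x - 1) ^ 2 + 20 * (x - 1) + 24 = 5 * x ^ 2 + 10 * x + 9 := by ring
  have e4 : 5 * (x - 4) ^ 2 + 20 * (x - 4) + 24 = 5 * x ^ 2 - 20 * x + 24 := by ring
  rw [e1, e4]
  set sA := Real.sqrt (5 * x ^ 2 + 10 * x + 9) with hsA
  set sB := Real.sqrt (5 * x ^ 2 - 4) with hsB
  set sC := Real.sqrt (5 * x ^ 2 - 20 * x + 24) with hsC
  set sD := Real.sqrt (5 * x ^ 2 + 20 * x + 24) with hsD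
  have hA0 : 0 ≤ sA := Real.sqrt_nonneg _
  have hB0 : 0 ≤ sB := Real.sqrt_nonneg _
  have hC0 : 0 ≤ sC := Real.sqrt_nonneg _
  have hD0 : 0 ≤ sD := Real.sqrt_nonneg _
  have hA2 : sA ^ 2 = 5 * x ^ 2 + 10 * x + 9 := Real.sq_sqrt (by nlinarith)
  have hB2 : sB ^ 2 = 5 * x ^ 2 - 4 := Real.sq_sqrt (by nlinarith)
  have hC2 : sC ^ 2 = 5 * x ^ 2 - 20 * x + 24 := Real.sq_sqrt (by nlinarith)
  have hD2 : sD ^ 2 = 5 * x ^ 2 + 20 * x + 24 := Real.sq_sqrt (by nlinarith)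
  -- key sqrt inequalities
  have hubB : sB ≤ 5 * x + 6 := by
    rw [hsB]
    have := Real.sqrt_le_sqrt (show 5 * x ^ 2 - 4 ≤ (5 * x + 6) ^ 2 by nlinarith)
    rwa [Real.sqrt_sq (by linarith)] at this
  have hubC : sC ≤ (5 * x - 11) / 2 := by
    rw [hsC]
    have := Real.sqrt_le_sqrt (show 5 * x ^ 2 - 20 * x + 24 ≤ ((5 * x - 11) / 2) ^ 2 by nlinarith)
    rwa [Real.sqrt_sq (by linarith)] at this
  have key1 : 1 + sB ≤ sA := by
    have h : (1 + sB) ^ 2 ≤ 5 * x ^ 2 + 10 * x + 9 := by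
      have e : (1 + sB) ^ 2 = 1 + 2 * sB + sB ^ 2 := by ring
      rw [e, hB2]; linarith
    have := Real.sqrt_le_sqrt h
    rwa [Real.sqrt_sq (by positivity)] at this
  have key2 : 4 + sC ≤ sB := by
    have h : (4 + sC) ^ 2 ≤ 5 * x ^ 2 - 4 := by
      have e : (4 + sC) ^ 2 = 16 + 8 * sC + sC ^ 2 := by ring
      rw [e, hC2]; linarith
    have := Real.sqrt_le_sqrt h
    rwa [Real.sqrt_sq (by positivity)] at this
  have key3 : sD ≤ 10 + sC := by
    have hClb : 2 * x - 5 ≤ sC := by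
      rw [hsC]; exact Real.le_sqrt_of_sq_le (by nlinarith)
    have h : 5 * x ^ 2 + 20 * x + 24 ≤ (10 + sC) ^ 2 := by
      have e : (10 + sC) ^ 2 = 100 + 20 * sC + sC ^ 2 := by ring
      rw [e, hC2]; linarith
    have := Real.sqrt_le_sqrt h
    rwa [Real.sqrt_sq (by positivity)] at this
  refine ⟨?_, ?_, ?_⟩
  · exact Int.ceil_le_ceil (by linarith)
  · have : (⌈(5 * x - 4 - sB) / 10⌉ : ℤ) ≤ ⌈(5 * (x - 4) + 2 - sC) / 10 + 1⌉ :=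
      Int.ceil_le_ceil (by linarith)
    rwa [Int.ceil_add_one] at this
  · have : (⌈(5 * (x - 4) + 2 - sC) / 10 + 1⌉ : ℤ) ≤ ⌈(5 * x + 2 - sD) / 10⌉ :=
      Int.ceil_le_ceil (by linarith)
    rwa [Int.ceil_add_one] at this
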